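/- Let A and B be nonempty closed convex subsets of X, and let U := {u ∈ X : u ≠ 0 and ⟪a, u⟫ ≤ ⟪b, u⟫ for all a ∈ A and all b ∈ B}. Then the intersection ⋂_{u ∈ U} {u}^⊥ (interpreted as all of X when U is empty) equals ccone(A − B) ∩ ccone(B − A), where A − B := {a − b : a ∈ A, b ∈ B}. -/

import Mathlib

open Filter Topology Pointwise

variable {X : Type*} [NormedAddCommGroup X] [InnerProductSpace ℝ X] [FiniteDimensional ℝ X]

def ccone (S : Set X) : Set X := closure {y : X | ∃ t : ℝ, 0 ≤ t ∧ ∃ s ∈ S, y = t • s}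

lemma closure_neg' (s : Set X) : closure (-s) = -closure s := by
  apply Set.Subset.antisymm
  · exact closure_minimal (Set.neg_subset_neg.2 subset_closure) isClosed_closure.neg
  · intro x hx
    rw [Set.mem_neg] at hx
    have hsub : closure s ⊆ -closure (-s) := by
      apply closure_minimal _ isClosed_closure.neg
      intro y hy
      rw [Set.mem_neg]
      exact subset_closure (by simpa using hy)
    have := hsub hx
    rw [Set.mem_neg, neg_neg] at this
    exact this

open RealInnerProductSpace in
lemma ccone_eq_coe_closure_toCone {S : Set X} (hS : Convex ℝ S) (hSne : S.Nonempty) :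
    ccone S = ((hS.toCone S).closure : Set X) := by
  rw [ConvexCone.coe_closure, ccone]
  apply Set.Subset.antisymm
  · apply closure_minimal _ isClosed_closure
    rintro y ⟨t, ht, s, hs, rfl⟩
    rcases eq_or_lt_of_le ht with h | h
    · have h0 : (0 : X) ∈ closure ((hS.toCone S) : Set X) := by
        have := ConvexCone.Pointed.of_nonempty_of_isClosed (C := (hS.toCone S).closure)
          ⟨s, subset_closure (hS.subset_toCone hs)⟩
          (by rw [ConvexCone.coe_closure]; exact isClosed_closure)
        rw [ConvexCone.Pointed, ← SetLike.mem_coe, ConvexCone.coe_closure] at this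
        exact this
      rw [← h, zero_smul]; exact h0
    · exact subset_closure (hS.mem_toCone.2 ⟨t, h, s, hs, rfl⟩)
  · apply closure_mono
    intro y hy
    rcases hS.mem_toCone.1 hy with ⟨c, hc, s, hs, rfl⟩
    exact ⟨c, hc.le, s, hs, rfl⟩

lemma neg_ccone (S : Set X) : ccone (-S) = -ccone S := by
  have h : {y : X | ∃ t : ℝ, 0 ≤ t ∧ ∃ s ∈ -S, y = t • s}
      = -{y : X | ∃ t : ℝ, 0 ≤ t ∧ ∃ s ∈ S, y = t • s} := by
    ext y
    constructor
    · rintro ⟨t, ht, s, hs, rfl⟩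
      rw [Set.mem_neg]
      exact ⟨t, ht, -s, hs, by simp⟩
    · intro hy
      rw [Set.mem_neg] at hy
      obtain ⟨t, ht, s, hs, h⟩ := hy
      exact ⟨t, ht, -s, by simpa using hs, by rw [smul_neg, ← h, neg_neg]⟩
  rw [ccone, ccone, h, closure_neg']

open RealInnerProductSpace in
theorem stmt4 (A B : Set X) (hAne : A.Nonempty) (hAcl : IsClosed A) (hAconv : Convex ℝ A)
    (hBne : B.Nonempty) (hBcl : IsClosed B) (hBconv : Convex ℝ B) :
    (⋂ u ∈ {u : X | u ≠ 0 ∧ ∀ a ∈ A, ∀ b ∈ B, (inner ℝ a u : ℝ) ≤ (inner ℝ b u : ℝ)},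
      {x : X | (inner ℝ x u : ℝ) = 0})
      = ccone (A - B) ∩ ccone (B - A) := by
  have hC : Convex ℝ (A - B) := hAconv.sub hBconv
  have hCne : (A - B).Nonempty := hAne.sub hBne
  set K : ConvexCone ℝ X := (hC.toCone (A - B)).closure with hKdef
  have hKset : (K : Set X) = ccone (A - B) := (ccone_eq_coe_closure_toCone hC hCne).symm
  have hKcl : IsClosed (K : Set X) := by rw [ConvexCone.coe_closure]; exact isClosed_closure
  have hKne : (K : Set X).Nonempty := by
    obtain ⟨s, hs⟩ := hCne
    exact ⟨s, by rw [ConvexCone.coe_closure]; exact subset_closure (hC.subset_toCone hs)⟩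
  -- dual of K equals dual of A - B
  have hdual : (ProperCone.innerDual (K : Set X) : Set X) = (ProperCone.innerDual (A - B) : Set X) := by
    apply Set.Subset.antisymm
    · intro v hv
      rw [SetLike.mem_coe, ProperCone.mem_innerDual] at hv ⊢
      intro c hc
      exact hv (by rw [ConvexCone.coe_closure]; exact subset_closure (hC.subset_toCone hc))
    · intro v hv
      rw [SetLike.mem_coe, ProperCone.mem_innerDual] at hv ⊢
      intro x hx
      have : (K : Set X) ⊆ {x : X | 0 ≤ ⟪x, v⟫} := by
        rw [ConvexCone.coe_closure]
        apply closure_minimal _ (isClosed_le continuous_const (continuous_id.inner continuous_const))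
        intro y hy
        rcases hC.mem_toCone.1 hy with ⟨c, hcpos, s, hs, rfl⟩
        simp only [Set.mem_setOf_eq, id_eq, real_inner_smul_left]
        exact mul_nonneg hcpos.le (hv hs)
      exact this hx
  -- bipolar
  obtain ⟨P, hP⟩ := CanLift.prf (β := ProperCone ℝ X) K ⟨hKne, hKcl⟩
  have hbipolar : (ProperCone.innerDual (ProperCone.innerDual (K : Set X) : Set X) : Set X)
      = (K : Set X) := by
    have hPK : ((P : ConvexCone ℝ X) : Set X) = (K : Set X) := by rw [hP]
    rw [← hPK]
    exact congrArg (fun C : ProperCone ℝ X => (C : Set X)) (ProperCone.innerDual_innerDual P)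
  have hmemK : ∀ x : X, x ∈ (K : Set X) ↔ ∀ v ∈ (ProperCone.innerDual (A - B) : Set X), 0 ≤ ⟪v, x⟫ := by
    intro x
    rw [← hbipolar, hdual]
    exact Iff.rfl
  have hset : B - A = -(A - B) := by
    ext x
    simp only [Set.mem_neg, Set.mem_sub]
    constructor
    · rintro ⟨b, hb, a, ha, rfl⟩; exact ⟨a, ha, b, hb, by abel⟩
    · rintro ⟨a, ha, b, hb, h⟩; exact ⟨b, hb, a, ha, by rw [← neg_sub a b, h, neg_neg]⟩
  have hBA : ccone (B - A) = -ccone (A - B) := by rw [hset, neg_ccone]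
  ext x
  simp only [Set.mem_iInter, Set.mem_setOf_eq, Set.mem_inter_iff, hBA, Set.mem_neg, ← hKset,
    hmemK]
  constructor
  · intro h
    have key : ∀ v ∈ (ProperCone.innerDual (A - B) : Set X), ⟪v, x⟫ = 0 := by
      intro v hv
      rcases eq_or_ne v 0 with rfl | hv0
      · simp
      · have hmem : ∀ a ∈ A, ∀ b ∈ B, ⟪a, -v⟫ ≤ ⟪b, -v⟫ := by
          intro a ha b hb
          have := (ProperCone.mem_innerDual.1 hv) (Set.sub_mem_sub ha hb)
          simp only [inner_sub_left] at this
          simp only [inner_neg_right]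
          linarith [real_inner_comm v (a - b), real_inner_comm a v, real_inner_comm b v,
            real_inner_comm (a-b) v]
        have := h (-v) ⟨neg_ne_zero.2 hv0, hmem⟩
        rw [inner_neg_right] at this
        rw [real_inner_comm]; linarith
    exact ⟨fun v hv => (key v hv).ge, fun v hv => by rw [inner_neg_right, (key v hv)]; simp⟩
  · rintro ⟨h1, h2⟩ u ⟨hu0, hu⟩
    have hvD : -u ∈ (ProperCone.innerDual (A - B) : Set X) := by
      rw [SetLike.mem_coe, ProperCone.mem_innerDual]
      rintro c ⟨a, ha, b, hb, rfl⟩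
      have := hu a ha b hb
      simp only [inner_neg_right, inner_sub_left]
      linarith
    have e1 := h1 (-u) hvD
    have e2 := h2 (-u) hvD
    rw [inner_neg_right] at e2
    rw [real_inner_comm]
    have : ⟪(-u : X), x⟫ = 0 := le_antisymm (by linarith) e1
    rw [inner_neg_left] at this
    linarith
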